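/- Let c>0 and define I₂(d)=∫_d^c log(c/(2√(c²−y²)))·dy/√((c²−y²)(y²−d²)) for 0<d<c. Then I₂(c(1−η)) = −(π/(4c))·log(2η) + O(η·log(1/η)) as η→0⁺; that is, there exist constants C>0 and η₀>0 such that |I₂(c(1−η)) + (π/(4c))·log(2η)| ≤ C·η·log(1/η) for all 0<η<η₀. -/

import Mathlib

/-- `I₂(d) = ∫_d^c log(c/(2√(c²−y²)))·dy/√((c²−y²)(y²−d²))`. -/
noncomputable def I2 (c d : ℝ) : ℝ :=
  ∫ y in d..c, Real.log (c / (2 * Real.sqrt (c^2 - y^2))) /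
    Real.sqrt ((c^2 - y^2) * (y^2 - d^2))

open Real MeasureTheory Set intervalIntegral
set_option linter.unusedSectionVars false

-- integrability of log ∘ sin on [0, π/2]
lemma neg_log_le (t : ℝ) (ht : 0 < t) : -Real.log t ≤ 2 / Real.sqrt t := by
  have h1 : 0 < Real.sqrt t := Real.sqrt_pos.2 ht
  have h2 : Real.log (1 / Real.sqrt t) ≤ 1 / Real.sqrt t - 1 :=
    Real.log_le_sub_one_of_pos (by positivity)
  have h3 : Real.log (1 / Real.sqrt t) = -(1/2) * Real.log t := by
    rw [Real.log_div one_ne_zero h1.ne', Real.log_one, Real.log_sqrt ht.le]; ring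
  have e : (2:ℝ)/Real.sqrt t = 2*(1/Real.sqrt t) := by ring
  nlinarith [h2, h3, e, one_div_pos.2 h1]

lemma II_log_sin : IntervalIntegrable (fun t => Real.log (Real.sin t)) volume 0 (π/2) := by
  rw [intervalIntegrable_iff_integrableOn_Ioc_of_le (by positivity)]
  have hbound : Integrable (fun t : ℝ => Real.log (π/2) + 2 * t ^ (-(1:ℝ)/2))
      (volume.restrict (Ioc 0 (π/2))) := by
    apply Integrable.add (integrable_const _)
    have : IntervalIntegrable (fun t : ℝ => t ^ (-(1:ℝ)/2)) volume 0 (π/2) :=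
      intervalIntegral.intervalIntegrable_rpow' (by norm_num)
    rw [intervalIntegrable_iff_integrableOn_Ioc_of_le (by positivity)] at this
    exact this.const_mul 2
  apply hbound.mono'
  · exact ((Real.measurable_log.comp Real.measurable_sin)).aestronglyMeasurable
  · filter_upwards [ae_restrict_mem measurableSet_Ioc] with t ht
    have ht0 : 0 < t := ht.1
    have htp : t ≤ π/2 := ht.2
    have hs0 : 0 < Real.sin t := Real.sin_pos_of_pos_of_lt_pi ht0 (by linarith [pi_pos])
    have hs1 : Real.sin t ≤ 1 := Real.sin_le_one t
    have hlog_nonpos : Real.log (Real.sin t) ≤ 0 := Real.log_nonpos hs0.le hs1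
    have hJordan : 2/π * t ≤ Real.sin t := Real.mul_le_sin ht0.le htp
    have h1 : Real.log (2/π * t) ≤ Real.log (Real.sin t) :=
      Real.log_le_log (by positivity) hJordan
    have h2 : Real.log (2/π * t) = Real.log (2/π) + Real.log t :=
      Real.log_mul (by positivity) ht0.ne'
    have h3 : Real.log (2/π) = - Real.log (π/2) := by
      rw [← Real.log_inv]; norm_num
    have h4 : -Real.log t ≤ 2 / Real.sqrt t := neg_log_le t ht0
    have h5 : (2:ℝ) / Real.sqrt t = 2 * t ^ (-(1:ℝ)/2) := by
      rw [Real.sqrt_eq_rpow, div_eq_mul_inv, ← Real.rpow_neg ht0.le]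
      norm_num
    rw [Real.norm_eq_abs, abs_of_nonpos hlog_nonpos]
    calc -Real.log (Real.sin t) ≤ -Real.log (2/π * t) := by linarith
      _ = Real.log (π/2) + (-Real.log t) := by rw [h2, h3]; ring
      _ ≤ Real.log (π/2) + 2 * t ^ (-(1:ℝ)/2) := by rw [← h5]; linarith

lemma II_log_cos : IntervalIntegrable (fun t => Real.log (Real.cos t)) volume 0 (π/2) := by
  have h := (II_log_sin.comp_sub_left (π/2))
  simp only [Real.sin_pi_div_two_sub] at h
  simpa using h.symm

lemma int_log_cos_eq : (∫ t in (0:ℝ)..(π/2), Real.log (Real.cos t))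
    = ∫ t in (0:ℝ)..(π/2), Real.log (Real.sin t) := by
  have := intervalIntegral.integral_comp_sub_left (a := (0:ℝ)) (b := π/2)
    (fun x => Real.log (Real.sin x)) (π/2)
  simp only [Real.sin_pi_div_two_sub] at this
  simpa using this

lemma int_log_sin_val : (∫ t in (0:ℝ)..(π/2), Real.log (Real.sin t)) = -(π/2) * Real.log 2 := by
  set S := ∫ t in (0:ℝ)..(π/2), Real.log (Real.sin t) with hS
  have hpi : (0:ℝ) < π := Real.pi_pos
  -- ∫_{π/2}^{π} log sin = S
  have h2 : (∫ t in (π/2:ℝ)..π, Real.log (Real.sin t)) = S := by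
    have := intervalIntegral.integral_comp_sub_left (a := (0:ℝ)) (b := π/2)
      (fun x => Real.log (Real.sin x)) π
    simp only [Real.sin_pi_sub] at this
    rw [show π - π/2 = π/2 by ring, sub_zero] at this
    rw [hS]; exact this.symm
  have II2 : IntervalIntegrable (fun t => Real.log (Real.sin t)) volume (π/2) π := by
    have h := (II_log_sin.comp_sub_left π)
    simp only [Real.sin_pi_sub] at h
    have : π - π/2 = π/2 := by ring
    rw [this] at h
    simpa using h.symm
  -- ∫_0^π log sin = 2S
  have h3 : (∫ t in (0:ℝ)..π, Real.log (Real.sin t)) = 2 * S := by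
    rw [← intervalIntegral.integral_add_adjacent_intervals II_log_sin II2, h2]; ring
  -- duplication
  have h4 : (∫ t in (0:ℝ)..(π/2), Real.log (Real.sin (2*t))) = S := by
    have := intervalIntegral.integral_comp_mul_left (a := (0:ℝ)) (b := π/2)
      (fun x => Real.log (Real.sin x)) (c := 2) two_ne_zero
    rw [this, show (2:ℝ)*0 = 0 by ring, show (2:ℝ)*(π/2) = π by ring, h3]
    simp [smul_eq_mul]
  -- a.e. splitting
  have h5 : (∫ t in (0:ℝ)..(π/2), Real.log (Real.sin (2*t)))
      = ∫ t in (0:ℝ)..(π/2), (Real.log 2 + Real.log (Real.sin t) + Real.log (Real.cos t)) := by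
    apply intervalIntegral.integral_congr_ae
    have hae : ∀ᵐ x : ℝ, x ∉ ({π/2} : Set ℝ) :=
      (Set.countable_singleton _).ae_notMem _
    filter_upwards [hae] with x hx hxI
    rw [Set.uIoc_of_le (by positivity)] at hxI
    have hx1 : 0 < x := hxI.1
    have hx2 : x < π/2 := lt_of_le_of_ne hxI.2 (by simpa using hx)
    have hsin : 0 < Real.sin x := Real.sin_pos_of_pos_of_lt_pi hx1 (by linarith)
    have hcos : 0 < Real.cos x := Real.cos_pos_of_mem_Ioo ⟨by linarith, hx2⟩
    rw [Real.sin_two_mul, Real.log_mul (by positivity) hcos.ne',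
      Real.log_mul two_ne_zero hsin.ne']
  have h6 : (∫ t in (0:ℝ)..(π/2), (Real.log 2 + Real.log (Real.sin t) + Real.log (Real.cos t)))
      = (π/2) * Real.log 2 + S + S := by
    rw [intervalIntegral.integral_add (by
        exact (intervalIntegrable_const (c := Real.log 2)).add II_log_sin) II_log_cos,
      intervalIntegral.integral_add (intervalIntegrable_const (c := Real.log 2)) II_log_sin,
      intervalIntegral.integral_const, int_log_cos_eq]
    simp [smul_eq_mul, hS]
    try ring
  have : S = (π/2) * Real.log 2 + S + S := by conv_lhs => rw [← h4, h5, h6]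
  linarith

section CoV
variable {c d : ℝ} (hd : 0 < d) (hdc : d < c)

private noncomputable def q (c d t : ℝ) : ℝ := d^2 + (c^2 - d^2) * Real.sin t ^ 2
private noncomputable def fm (c d t : ℝ) : ℝ := Real.sqrt (q c d t)

include hd hdc

private lemma he : (0:ℝ) < c^2 - d^2 := by nlinarith [mul_pos (show (0:ℝ) < c - d by linarith) (show (0:ℝ) < c + d by linarith)]

private lemma q_pos (t : ℝ) : 0 < q c d t := by
  have h1 : 0 ≤ (c^2 - d^2) * Real.sin t ^ 2 :=
    mul_nonneg (he hd hdc).le (sq_nonneg _)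
  have : 0 < d^2 := by positivity
  unfold q; linarith

private lemma q_le (t : ℝ) : q c d t ≤ c^2 := by
  have h1 := Real.sin_sq_le_one t
  have h2 := he hd hdc
  have h3 : (c^2 - d^2) * Real.sin t ^ 2 ≤ (c^2 - d^2) * 1 :=
    mul_le_mul_of_nonneg_left h1 h2.le
  unfold q; linarith

private lemma fm_ge (t : ℝ) : d ≤ fm c d t := by
  have h0 : 0 ≤ (c^2 - d^2) * Real.sin t ^ 2 := mul_nonneg (he hd hdc).le (sq_nonneg _)
  have h1 : d^2 ≤ q c d t := by unfold q; linarith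
  have h2 := Real.sqrt_le_sqrt h1
  rwa [Real.sqrt_sq hd.le] at h2

private lemma fm_le (t : ℝ) : fm c d t ≤ c := by
  have h2 := Real.sqrt_le_sqrt (q_le hd hdc t)
  rwa [Real.sqrt_sq (by linarith : (0:ℝ) ≤ c)] at h2

private lemma fm_cont : Continuous (fm c d) := by
  unfold fm q
  exact (continuous_const.add (continuous_const.mul (Real.continuous_sin.pow 2))).sqrt

private lemma fm_deriv (t : ℝ) :
    HasDerivAt (fm c d) ((c^2 - d^2) * (2 * Real.sin t * Real.cos t) / (2 * fm c d t)) t := by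
  have hq : HasDerivAt (q c d) ((c^2 - d^2) * (2 * Real.sin t * Real.cos t)) t := by
    have h1 : HasDerivAt (fun t => Real.sin t ^ 2) (2 * Real.sin t ^ (2-1) * Real.cos t) t :=
      (Real.hasDerivAt_sin t).pow 2
    have h2 := (h1.const_mul (c^2 - d^2)).const_add (d^2)
    exact h2.congr_deriv (by ring)
  exact hq.sqrt (q_pos hd hdc t).ne'

private lemma fm_injOn : Set.InjOn (fm c d) (Set.Ioo 0 (π/2)) := by
  intro t1 h1 t2 h2 hfe
  have hq : q c d t1 = q c d t2 := by
    have e1 := Real.sq_sqrt (q_pos hd hdc t1).le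
    have e2 := Real.sq_sqrt (q_pos hd hdc t2).le
    unfold fm at hfe
    rw [← e1, ← e2, hfe]
  have hs2 : Real.sin t1 ^ 2 = Real.sin t2 ^ 2 := by
    have hcd : c^2 - d^2 ≠ 0 := by nlinarith
    unfold q at hq
    exact mul_left_cancel₀ hcd (add_left_cancel hq)
  have hs : Real.sin t1 = Real.sin t2 := by
    have p1 : 0 ≤ Real.sin t1 := Real.sin_nonneg_of_nonneg_of_le_pi h1.1.le
      (by linarith [h1.2, Real.pi_pos])
    have p2 : 0 ≤ Real.sin t2 := Real.sin_nonneg_of_nonneg_of_le_pi h2.1.le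
      (by linarith [h2.2, Real.pi_pos])
    nlinarith
  have : Set.InjOn Real.sin (Set.Icc (-(π/2)) (π/2)) := Real.strictMonoOn_sin.injOn
  apply this ⟨by linarith [h1.1, Real.pi_pos], h1.2.le⟩ ⟨by linarith [h2.1, Real.pi_pos], h2.2.le⟩ hs

private lemma fm_zero : fm c d 0 = d := by
  unfold fm q; simp [Real.sqrt_sq hd.le]

private lemma fm_pi_div_two : fm c d (π/2) = c := by
  unfold fm q
  rw [Real.sin_pi_div_two]
  rw [show d^2 + (c^2 - d^2) * 1^2 = c^2 by ring]
  exact Real.sqrt_sq (by linarith)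

private lemma fm_image : fm c d '' (Set.Ioo 0 (π/2)) = Set.Ioo d c := by
  apply Set.Subset.antisymm
  · rintro y ⟨t, ht, rfl⟩
    have hst : 0 < Real.sin t := Real.sin_pos_of_pos_of_lt_pi ht.1 (by linarith [ht.2, Real.pi_pos])
    have hst1 : Real.sin t < 1 := by
      have := Real.strictMonoOn_sin (Set.mem_Icc.2 ⟨by linarith [ht.1, Real.pi_pos], ht.2.le⟩)
        (Set.mem_Icc.2 ⟨by linarith [Real.pi_pos], le_refl _⟩) ht.2
      rwa [Real.sin_pi_div_two] at this
    constructor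
    · have : d^2 < q c d t := by
        unfold q
        nlinarith [mul_pos (he hd hdc) (pow_pos hst 2)]
      have := Real.sqrt_lt_sqrt (by positivity) this
      rwa [Real.sqrt_sq hd.le] at this
    · have : q c d t < c^2 := by
        unfold q
        nlinarith [mul_lt_mul_of_pos_left (show Real.sin t^2 < 1 by nlinarith) (he hd hdc)]
      have h2 := Real.sqrt_lt_sqrt (q_pos hd hdc t).le this
      rwa [Real.sqrt_sq (by linarith : (0:ℝ) ≤ c)] at h2
  · have hiv := intermediate_value_Ioo (a := (0:ℝ)) (b := π/2) (by positivity)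
      ((fm_cont hd hdc).continuousOn (s := Set.Icc 0 (π/2)))
    rwa [fm_zero hd hdc, fm_pi_div_two hd hdc] at hiv

/-- The change of variables identity. -/
private lemma I2_eq : I2 c d = ∫ t in Set.Ioo 0 (π/2),
    (Real.log (c / (2 * Real.sqrt (c^2 - d^2))) - Real.log (Real.cos t)) / fm c d t := by
  have hcov := MeasureTheory.integral_image_eq_integral_abs_deriv_smul
    (measurableSet_Ioo (a := (0:ℝ)) (b := π/2))
    (fun t _ => (fm_deriv hd hdc t).hasDerivWithinAt)
    (fm_injOn hd hdc)
    (fun y => Real.log (c / (2 * Real.sqrt (c^2 - y^2))) / Real.sqrt ((c^2 - y^2) * (y^2 - d^2)))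
  rw [fm_image hd hdc] at hcov
  rw [I2, intervalIntegral.integral_of_le hdc.le, MeasureTheory.integral_Ioc_eq_integral_Ioo,
    hcov]
  apply MeasureTheory.setIntegral_congr_fun measurableSet_Ioo
  intro t ht
  have hst : 0 < Real.sin t := Real.sin_pos_of_pos_of_lt_pi ht.1 (by linarith [ht.2, Real.pi_pos])
  have hct : 0 < Real.cos t := Real.cos_pos_of_mem_Ioo ⟨by linarith [ht.1, Real.pi_pos], ht.2⟩
  have he : (0:ℝ) < c^2 - d^2 := he hd hdc
  have hfpos : 0 < fm c d t := lt_of_lt_of_le hd (fm_ge hd hdc t)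
  have hf2 : fm c d t ^ 2 = q c d t := Real.sq_sqrt (q_pos hd hdc t).le
  have hc2 : c^2 - fm c d t ^ 2 = (c^2 - d^2) * Real.cos t ^ 2 := by
    rw [hf2]; unfold q
    have := Real.sin_sq_add_cos_sq t
    nlinarith
  have hd2 : fm c d t ^ 2 - d^2 = (c^2 - d^2) * Real.sin t ^ 2 := by
    rw [hf2]; unfold q; ring
  have hsq1 : Real.sqrt ((c^2 - fm c d t ^ 2) * (fm c d t ^ 2 - d^2))
      = (c^2 - d^2) * Real.sin t * Real.cos t := by
    rw [hc2, hd2, show (c^2-d^2) * Real.cos t^2 * ((c^2-d^2) * Real.sin t^2)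
      = ((c^2-d^2) * Real.sin t * Real.cos t)^2 by ring]
    exact Real.sqrt_sq (by positivity)
  have hsq2 : Real.sqrt (c^2 - fm c d t ^ 2) = Real.sqrt (c^2 - d^2) * Real.cos t := by
    rw [hc2, show (c^2-d^2) * Real.cos t^2 = (c^2 - d^2) * Real.cos t^2 by ring,
      Real.sqrt_mul he.le, Real.sqrt_sq hct.le]
  have hlog : Real.log (c / (2 * Real.sqrt (c^2 - fm c d t ^ 2)))
      = Real.log (c / (2 * Real.sqrt (c^2 - d^2))) - Real.log (Real.cos t) := by
    rw [hsq2, show (2 : ℝ) * (Real.sqrt (c^2-d^2) * Real.cos t)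
        = (2 * Real.sqrt (c^2-d^2)) * Real.cos t by ring,
      ← div_div, Real.log_div _ hct.ne']
    have hsp : 0 < Real.sqrt (c^2 - d^2) := Real.sqrt_pos.2 he
    exact ne_of_gt (div_pos (by linarith) (by linarith))
  have habs : |(c^2 - d^2) * (2 * Real.sin t * Real.cos t) / (2 * fm c d t)|
      = (c^2 - d^2) * Real.sin t * Real.cos t / fm c d t := by
    rw [abs_of_pos (by positivity)]; ring
  simp only [smul_eq_mul, habs, hlog]
  rw [hsq1]
  field_simp
end CoV

section Est
variable {c d : ℝ} (hd : 0 < d) (hdc : d < c)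
include hd hdc

private lemma fm_ne (t : ℝ) : fm c d t ≠ 0 := by
  have := fm_ge hd hdc t; linarith

private lemma Kint : MeasureTheory.IntegrableOn (fun t => 1 / fm c d t)
    (Set.Ioo 0 (π/2)) volume := by
  have hcont : Continuous (fun t => 1 / fm c d t) :=
    continuous_const.div (fm_cont hd hdc) (fm_ne hd hdc)
  exact (hcont.continuousOn).integrableOn_compact isCompact_Icc |>.mono_set Set.Ioo_subset_Icc_self

private lemma logcos_int : MeasureTheory.IntegrableOn (fun t => Real.log (Real.cos t))
    (Set.Ioo 0 (π/2)) volume := by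
  have := II_log_cos
  rw [intervalIntegrable_iff_integrableOn_Ioc_of_le (by positivity)] at this
  exact this.mono_set Set.Ioo_subset_Ioc_self

private lemma Jint : MeasureTheory.IntegrableOn (fun t => (-Real.log (Real.cos t)) / fm c d t)
    (Set.Ioo 0 (π/2)) volume := by
  apply MeasureTheory.Integrable.mono' ((logcos_int hd hdc).norm.div_const d)
  · exact ((Real.measurable_log.comp Real.measurable_cos).neg.div
      (fm_cont hd hdc).measurable).aestronglyMeasurable
  · filter_upwards [MeasureTheory.ae_restrict_mem measurableSet_Ioo] with t ht
    have hfm := fm_ge hd hdc t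
    rw [norm_div, Real.norm_eq_abs, Real.norm_eq_abs, abs_neg,
      abs_of_pos (lt_of_lt_of_le hd hfm)]
    apply div_le_div_of_nonneg_left (abs_nonneg _) hd hfm

private lemma const_int (r : ℝ) : MeasureTheory.IntegrableOn (fun _ : ℝ => r)
    (Set.Ioo 0 (π/2)) volume := by
  exact MeasureTheory.integrableOn_const (by rw [Real.volume_Ioo]; exact ENNReal.ofReal_ne_top)

private lemma int_const (r : ℝ) : (∫ _ in Set.Ioo (0:ℝ) (π/2), r) = (π/2) * r := by
  rw [MeasureTheory.setIntegral_const, Real.volume_real_Ioo_of_le (by positivity), sub_zero,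
    smul_eq_mul]

private lemma K_bounds : (π/2) * (1/c) ≤ (∫ t in Set.Ioo (0:ℝ) (π/2), 1 / fm c d t)
    ∧ (∫ t in Set.Ioo (0:ℝ) (π/2), 1 / fm c d t) ≤ (π/2) * (1/d) := by
  constructor
  · rw [← int_const hd hdc (1/c)]
    apply MeasureTheory.setIntegral_mono_on (const_int hd hdc _) (Kint hd hdc) measurableSet_Ioo
    intro t _
    exact div_le_div_of_nonneg_left zero_le_one (lt_of_lt_of_le hd (fm_ge hd hdc t)) (fm_le hd hdc t)
  · rw [← int_const hd hdc (1/d)]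
    apply MeasureTheory.setIntegral_mono_on (Kint hd hdc) (const_int hd hdc _) measurableSet_Ioo
    intro t _
    exact div_le_div_of_nonneg_left zero_le_one hd (fm_ge hd hdc t)

private lemma neglogcos_nonneg {t : ℝ} (ht : t ∈ Set.Ioo (0:ℝ) (π/2)) :
    0 ≤ -Real.log (Real.cos t) := by
  have hct : 0 < Real.cos t := Real.cos_pos_of_mem_Ioo ⟨by linarith [ht.1, Real.pi_pos], ht.2⟩
  have := Real.log_nonpos hct.le (Real.cos_le_one t)
  linarith

private lemma neglogcos_val : (∫ t in Set.Ioo (0:ℝ) (π/2), -Real.log (Real.cos t))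
    = (π/2) * Real.log 2 := by
  have h1 : (∫ t in Set.Ioo (0:ℝ) (π/2), Real.log (Real.cos t)) = -(π/2) * Real.log 2 := by
    rw [← MeasureTheory.integral_Ioc_eq_integral_Ioo,
      ← intervalIntegral.integral_of_le (by positivity : (0:ℝ) ≤ π/2),
      int_log_cos_eq, int_log_sin_val]
  rw [MeasureTheory.integral_neg, h1]
  ring

private lemma J_bounds :
    (1/c) * ((π/2) * Real.log 2) ≤ (∫ t in Set.Ioo (0:ℝ) (π/2), (-Real.log (Real.cos t)) / fm c d t)
    ∧ (∫ t in Set.Ioo (0:ℝ) (π/2), (-Real.log (Real.cos t)) / fm c d t)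
      ≤ (1/d) * ((π/2) * Real.log 2) := by
  have hnegint : MeasureTheory.IntegrableOn (fun t => -Real.log (Real.cos t))
      (Set.Ioo 0 (π/2)) volume := (logcos_int hd hdc).neg
  constructor
  · have : (1/c) * ((π/2) * Real.log 2)
        = ∫ t in Set.Ioo (0:ℝ) (π/2), (-Real.log (Real.cos t)) / c := by
      rw [MeasureTheory.integral_div, neglogcos_val hd hdc]
      ring
    rw [this]
    apply MeasureTheory.setIntegral_mono_on (hnegint.div_const c) (Jint hd hdc) measurableSet_Ioo
    intro t ht
    apply div_le_div_of_nonneg_left (neglogcos_nonneg hd hdc ht)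
      (lt_of_lt_of_le hd (fm_ge hd hdc t)) (fm_le hd hdc t)
  · have : (1/d) * ((π/2) * Real.log 2)
        = ∫ t in Set.Ioo (0:ℝ) (π/2), (-Real.log (Real.cos t)) / d := by
      rw [MeasureTheory.integral_div, neglogcos_val hd hdc]
      ring
    rw [this]
    apply MeasureTheory.setIntegral_mono_on (Jint hd hdc) (hnegint.div_const d) measurableSet_Ioo
    intro t ht
    apply div_le_div_of_nonneg_left (neglogcos_nonneg hd hdc ht) hd (fm_ge hd hdc t)

private lemma I2_split : I2 c d
    = Real.log (c / (2 * Real.sqrt (c^2 - d^2))) * (∫ t in Set.Ioo (0:ℝ) (π/2), 1 / fm c d t)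
      + (∫ t in Set.Ioo (0:ℝ) (π/2), (-Real.log (Real.cos t)) / fm c d t) := by
  rw [I2_eq hd hdc]
  set A := Real.log (c / (2 * Real.sqrt (c^2 - d^2)))
  have hpt : ∀ t : ℝ, (A - Real.log (Real.cos t)) / fm c d t
      = A * (1 / fm c d t) + (-Real.log (Real.cos t)) / fm c d t := by
    intro t
    rw [sub_div, neg_div]
    ring
  simp_rw [hpt]
  rw [MeasureTheory.integral_add ((Kint hd hdc).const_mul A) (Jint hd hdc),
    MeasureTheory.integral_const_mul]
end Est

set_option maxHeartbeats 1000000 in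
theorem stmt8 (c : ℝ) (hc : 0 < c) :
    ∃ C > 0, ∃ η₀ > 0, ∀ η : ℝ, 0 < η → η < η₀ →
      |I2 c (c * (1 - η)) + (Real.pi / (4*c)) * Real.log (2*η)|
        ≤ C * η * Real.log (1/η) := by
  refine ⟨7/c, by positivity, 1/8, by norm_num, fun η hη hη8 => ?_⟩
  set d := c * (1 - η) with hd_def
  have hd : 0 < d := by rw [hd_def]; nlinarith
  have hdc : d < c := by rw [hd_def]; nlinarith
  set K := ∫ t in Set.Ioo (0:ℝ) (π/2), 1 / fm c d t with hK_def
  set J := ∫ t in Set.Ioo (0:ℝ) (π/2), (-Real.log (Real.cos t)) / fm c d t with hJ_def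
  set A := Real.log (c / (2 * Real.sqrt (c^2 - d^2))) with hA_def
  set L := Real.log (1/η) with hL_def
  obtain ⟨hK1, hK2⟩ := K_bounds hd hdc
  obtain ⟨hJ1, hJ2⟩ := J_bounds hd hdc
  have hsplit : I2 c d = A * K + J := I2_split hd hdc
  have hL : L = -Real.log η := by rw [hL_def, one_div, Real.log_inv]
  -- value of A
  have h2η : (0:ℝ) < 2 - η := by linarith
  have hx : (0:ℝ) < η * (2 - η) := by positivity
  have hd2 : c^2 - d^2 = c^2 * (η * (2 - η)) := by rw [hd_def]; ring
  have hsqrt : Real.sqrt (c^2 - d^2) = c * Real.sqrt (η * (2-η)) := by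
    rw [hd2, Real.sqrt_mul (sq_nonneg c), Real.sqrt_sq hc.le]
  have hsx : 0 < Real.sqrt (η * (2-η)) := Real.sqrt_pos.2 hx
  have hA : A = -Real.log 2 - (1/2) * Real.log η - (1/2) * Real.log (2-η) := by
    rw [hA_def, hsqrt, show c / (2 * (c * Real.sqrt (η * (2-η))))
        = 1 / (2 * Real.sqrt (η * (2-η))) by field_simp,
      one_div, Real.log_inv, Real.log_mul two_ne_zero hsx.ne', Real.log_sqrt hx.le,
      Real.log_mul hη.ne' h2η.ne']
    ring
  -- log bounds
  have hlog2pos : 0 < Real.log 2 := Real.log_pos one_lt_two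
  have hlog2le : Real.log 2 ≤ 1 := by
    have := Real.log_two_lt_d9; linarith
  have hL8 : 3 * Real.log 2 ≤ L := by
    have h8 : (8:ℝ) ≤ 1/η := by
      rw [le_div_iff₀ hη]; linarith
    have := Real.log_le_log (by norm_num : (0:ℝ) < 8) h8
    rw [show (8:ℝ) = 2^3 by norm_num, Real.log_pow] at this
    push_cast at this
    rw [hL_def]; linarith
  have hlog2gt : (0.6931471803 : ℝ) < Real.log 2 := Real.log_two_gt_d9
  have hL2 : 2 ≤ L := by linarith
  have hlogsub : Real.log 2 - Real.log (2-η) ≤ η := by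
    have h := Real.log_le_sub_one_of_pos (show (0:ℝ) < 2/(2-η) by positivity)
    rw [Real.log_div two_ne_zero h2η.ne'] at h
    have h2 : 2/(2-η) - 1 ≤ η := by
      rw [div_sub_one h2η.ne', div_le_iff₀ h2η]; nlinarith
    linarith
  have hlog2mη : Real.log (2-η) ≤ Real.log 2 := Real.log_le_log h2η (by linarith)
  have hlog2mη0 : 0 ≤ Real.log (2-η) := Real.log_nonneg (by linarith)
  have hAub : A ≤ (1/2) * L := by rw [hA, hL]; linarith
  have hAlb2 : (1/2) * L - (3/2) * Real.log 2 ≤ A := by rw [hA, hL]; linarith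
  have hAub2 : A ≤ (1/2) * L - (3/2) * Real.log 2 + η/2 := by rw [hA, hL]; linarith
  have hAlb : 0 ≤ A := by linarith
  -- 1/d bound
  have hinv : 1/d ≤ (1 + 2*η)/c := by
    rw [hd_def, div_le_div_iff₀ (by nlinarith) hc]
    nlinarith
  have hinvc : 0 < 1/c := by positivity
  have hlog2η : Real.log (2*η) = Real.log 2 + Real.log η :=
    Real.log_mul two_ne_zero hη.ne'
  -- rewrite goal
  have hT : I2 c d + π/(4*c) * Real.log (2*η)
      = A * K + J + π/(4*c) * (Real.log 2 - L) := by
    rw [hsplit, hlog2η, hL]; ring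
  -- bounds on A*K
  have hπ : 0 < π := Real.pi_pos
  have hπ4 : π ≤ 4 := by linarith [Real.pi_le_four]
  have hAK_lb : A * ((π/2) * (1/c)) ≤ A * K := mul_le_mul_of_nonneg_left hK1 hAlb
  have hAK_ub : A * K ≤ A * ((π/2) * ((1+2*η)/c)) := by
    apply (mul_le_mul_of_nonneg_left hK2 hAlb).trans
    apply mul_le_mul_of_nonneg_left _ hAlb
    apply mul_le_mul_of_nonneg_left hinv (by positivity)
  have hJ_ub : J ≤ ((1+2*η)/c) * ((π/2) * Real.log 2) := by
    apply hJ2.trans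
    apply mul_le_mul_of_nonneg_right hinv (by positivity)
  -- lower bound: T ≥ 0
  have hTlb : 0 ≤ I2 c d + π/(4*c) * Real.log (2*η) := by
    rw [hT]
    have h1 : ((1/2) * L - (3/2) * Real.log 2) * ((π/2) * (1/c)) ≤ A * ((π/2) * (1/c)) :=
      mul_le_mul_of_nonneg_right hAlb2 (by positivity)
    have h2 : (1/c) * ((π/2) * Real.log 2) ≤ J := hJ1
    have : ((1/2) * L - (3/2) * Real.log 2) * ((π/2) * (1/c))
        + (1/c) * ((π/2) * Real.log 2) + π/(4*c) * (Real.log 2 - L) = 0 := by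
      field_simp
      ring
    nlinarith
  -- upper bound
  have hAη : A * (2*η) ≤ (1/2)*L * (2*η) := mul_le_mul_of_nonneg_right hAub (by positivity)
  have hAc : A * ((π/2) * (1/c)) ≤ ((1/2) * L - (3/2) * Real.log 2 + η/2) * ((π/2) * (1/c)) :=
    mul_le_mul_of_nonneg_right hAub2 (by positivity)
  have hTub : I2 c d + π/(4*c) * Real.log (2*η) ≤ 7/c * η * L := by
    rw [hT]
    have e1 : A * ((π/2) * ((1+2*η)/c)) = A * ((π/2) * (1/c)) + A * (2*η) * ((π/2) * (1/c)) := by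
      field_simp
    have e2 : A * (2*η) * ((π/2) * (1/c)) ≤ (1/2)*L*(2*η) * ((π/2) * (1/c)) :=
      mul_le_mul_of_nonneg_right hAη (by positivity)
    have e3 : ((1+2*η)/c) * ((π/2) * Real.log 2)
        = (1/c) * ((π/2) * Real.log 2) + (2*η/c) * ((π/2) * Real.log 2) := by
      field_simp
    have e4 : (2*η/c) * ((π/2) * Real.log 2) ≤ (2*η/c) * ((π/2) * 1) := by
      apply mul_le_mul_of_nonneg_left _ (by positivity)
      apply mul_le_mul_of_nonneg_left hlog2le (by positivity)
    -- collect everything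
    have key : ((1/2) * L - (3/2) * Real.log 2 + η/2) * ((π/2) * (1/c))
        + (1/2)*L*(2*η) * ((π/2) * (1/c))
        + (1/c) * ((π/2) * Real.log 2) + (2*η/c) * ((π/2) * 1)
        + π/(4*c) * (Real.log 2 - L) ≤ 7/c * η * L := by
      have hc' : 0 < 1/c := hinvc
      have expand : ((1/2) * L - (3/2) * Real.log 2 + η/2) * ((π/2) * (1/c))
          + (1/2)*L*(2*η) * ((π/2) * (1/c))
          + (1/c) * ((π/2) * Real.log 2) + (2*η/c) * ((π/2) * 1)
          + π/(4*c) * (Real.log 2 - L)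
          = (1/c) * (π * η/4 + π/2 * L * η + π * η) := by
        field_simp
        ring
      rw [expand, show 7/c * η * L = (1/c) * (7 * η * L) by ring]
      apply mul_le_mul_of_nonneg_left _ hc'.le
      have hLpos : (0:ℝ) < L := by linarith
      have p1 : π * η ≤ 4 * η := mul_le_mul_of_nonneg_right hπ4 hη.le
      have p2 : π * (L * η) ≤ 4 * (L * η) :=
        mul_le_mul_of_nonneg_right hπ4 (by positivity)
      have p3 : 2 * η ≤ L * η := mul_le_mul_of_nonneg_right hL2 hη.le
      have p4 : 0 < L * η := mul_pos hLpos hη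
      linarith only [p1, p2, p3, p4]
    calc A * K + J + π/(4*c) * (Real.log 2 - L)
        ≤ A * ((π/2) * ((1+2*η)/c)) + ((1+2*η)/c) * ((π/2) * Real.log 2)
          + π/(4*c) * (Real.log 2 - L) := by linarith [hAK_ub, hJ_ub]
      _ ≤ ((1/2) * L - (3/2) * Real.log 2 + η/2) * ((π/2) * (1/c))
          + (1/2)*L*(2*η) * ((π/2) * (1/c))
          + (1/c) * ((π/2) * Real.log 2) + (2*η/c) * ((π/2) * 1)
          + π/(4*c) * (Real.log 2 - L) := by
            rw [e1, e3]
            linarith [hAc, e2, e4]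
      _ ≤ 7/c * η * L := key
  rw [abs_of_nonneg hTlb]
  exact hTub
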